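/- Fix 0 ≤ α < β ≤ π/2 and δ > 0. There is a constant C = C(δ,α,β) such that for all integers N ≥ 1, d ≥ 1 and all reals Δ ∈ (0,1], Z ∈ (0,(β−α)/2], the set S(N) of pairs (a,b) of coprime positive integers with d ∣ a²+b², N ≤ a²+b² ≤ 2N, and such that either (N ≤ a²+b² ≤ N+ΔN or 2N−ΔN ≤ a²+b² ≤ 2N) or (α ≤ arctan(b/a) ≤ α+Z or β−Z ≤ arctan(b/a) ≤ β), satisfies #S(N) ≤ C·(d^δ·N^{1/2} + N·Z/d^{1−δ} + Δ·N^{1+δ}/d). -/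

import Mathlib

open Real
open scoped Classical

section AuxLemmas
open Finset

theorem tau_bound (ε : ℝ) (hε : 0 < ε) :
    ∃ K : ℝ, 1 ≤ K ∧ ∀ n : ℕ, 1 ≤ n → (n.divisors.card : ℝ) ≤ K * (n : ℝ) ^ ε := by
  set c : ℝ := 2 ^ ε - 1 with hc
  have hc0 : 0 < c := by
    have : (1:ℝ) < 2 ^ ε := by
      rw [show (2:ℝ) ^ ε = (2:ℝ) ^ ε from rfl]
      have := Real.one_lt_rpow_iff (x := 2) (y := ε) (by norm_num)
      exact this.mpr (Or.inl ⟨by norm_num, hε⟩)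
    linarith
  set M : ℝ := max 1 c⁻¹ with hM
  have hM1 : 1 ≤ M := le_max_left _ _
  have hMc : 1 ≤ M * c := by
    have : c⁻¹ ≤ M := le_max_right _ _
    calc (1:ℝ) = c⁻¹ * c := by field_simp
    _ ≤ M * c := by nlinarith
  set B : ℕ := ⌈(2:ℝ) ^ (1/ε)⌉₊ with hB
  refine ⟨M ^ B, one_le_pow₀ hM1, ?_⟩
  intro n hn
  have hn0 : n ≠ 0 := by omega
  have key : ∀ p ∈ n.primeFactors, ((n.factorization p + 1 : ℕ) : ℝ) ≤
      (if p < B then M else 1) * ((p : ℝ) ^ (n.factorization p : ℕ)) ^ ε := by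
    intro p hp
    have hpp : p.Prime := Nat.prime_of_mem_primeFactors hp
    have hp2 : (2:ℝ) ≤ p := by exact_mod_cast hpp.two_le
    set k := n.factorization p with hk
    have hrw : ((p : ℝ) ^ (k : ℕ)) ^ ε = ((p:ℝ) ^ ε) ^ (k:ℕ) := by
      rw [← Real.rpow_natCast (p:ℝ) k, ← Real.rpow_mul (by positivity), mul_comm,
        Real.rpow_mul (by positivity), Real.rpow_natCast]
    rw [hrw]
    by_cases hpB : p < B
    · simp only [hpB, if_true]
      have h2e : (2:ℝ) ^ ε ≤ (p:ℝ) ^ ε := Real.rpow_le_rpow (by norm_num) hp2 hε.le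
      have hbern : 1 + (k:ℝ) * c ≤ ((2:ℝ) ^ ε) ^ (k:ℕ) := by
        have := one_add_mul_le_pow (a := c) (by linarith) k
        calc 1 + (k:ℝ) * c ≤ (1 + c) ^ (k:ℕ) := this
        _ = ((2:ℝ)^ε) ^ (k:ℕ) := by rw [hc]; ring_nf
      have hpow : ((2:ℝ)^ε) ^ (k:ℕ) ≤ ((p:ℝ)^ε) ^ (k:ℕ) := by
        apply pow_le_pow_left₀ (by positivity) h2e
      push_cast
      calc (k:ℝ) + 1 ≤ M * (1 + (k:ℝ) * c) := by nlinarith [hM1, hMc, Nat.cast_nonneg (α := ℝ) k]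
      _ ≤ M * ((p:ℝ)^ε) ^ (k:ℕ) := by nlinarith [hbern, hpow, hM1]
    · simp only [hpB, if_false, one_mul]
      have hpB' : (2:ℝ) ^ (1/ε) ≤ p := by
        calc (2:ℝ) ^ (1/ε) ≤ B := Nat.le_ceil _
        _ ≤ p := by exact_mod_cast Nat.not_lt.mp hpB
      have h2 : (2:ℝ) ≤ (p:ℝ) ^ ε := by
        calc (2:ℝ) = ((2:ℝ) ^ (1/ε)) ^ ε := by
              rw [← Real.rpow_mul (by norm_num), one_div_mul_cancel hε.ne', Real.rpow_one]
        _ ≤ (p:ℝ) ^ ε := Real.rpow_le_rpow (by positivity) hpB' hε.le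
      calc ((k + 1 : ℕ) : ℝ) ≤ ((2^k : ℕ) : ℝ) := by exact_mod_cast Nat.lt_two_pow_self (n := k)
      _ = (2:ℝ) ^ (k:ℕ) := by push_cast; ring
      _ ≤ ((p:ℝ)^ε) ^ (k:ℕ) := pow_le_pow_left₀ (by norm_num) h2 _
  have hτ : (n.divisors.card : ℝ) = ∏ p ∈ n.primeFactors, ((n.factorization p + 1 : ℕ) : ℝ) := by
    rw [Nat.card_divisors hn0]; push_cast; ring
  have hnε : (n : ℝ) ^ ε = ∏ p ∈ n.primeFactors, ((p : ℝ) ^ (n.factorization p : ℕ)) ^ ε := by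
    rw [finset_prod_rpow _ _ (fun i _ => by positivity)]
    congr 1
    conv_lhs => rw [← Nat.factorization_prod_pow_eq_self hn0]
    rw [Finsupp.prod, Nat.support_factorization]
    push_cast
    rfl
  rw [hτ, hnε]
  calc ∏ p ∈ n.primeFactors, ((n.factorization p + 1 : ℕ) : ℝ)
      ≤ ∏ p ∈ n.primeFactors, ((if p < B then M else 1) * ((p : ℝ) ^ (n.factorization p : ℕ)) ^ ε) :=
        Finset.prod_le_prod (fun i _ => by positivity) key
    _ = (∏ p ∈ n.primeFactors, (if p < B then M else 1)) *
        ∏ p ∈ n.primeFactors, ((p : ℝ) ^ (n.factorization p : ℕ)) ^ ε := Finset.prod_mul_distrib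
    _ ≤ M ^ B * ∏ p ∈ n.primeFactors, ((p : ℝ) ^ (n.factorization p : ℕ)) ^ ε := by
        apply mul_le_mul_of_nonneg_right _ (Finset.prod_nonneg fun i _ => by positivity)
        calc ∏ p ∈ n.primeFactors, (if p < B then M else 1)
            = ∏ p ∈ n.primeFactors.filter (· < B), M := by
              rw [Finset.prod_ite, Finset.prod_const, Finset.prod_const, one_pow, mul_one]
          _ = M ^ (n.primeFactors.filter (· < B)).card := by rw [Finset.prod_const]
          _ ≤ M ^ B := by
              apply pow_le_pow_right₀ hM1
              calc (n.primeFactors.filter (· < B)).card ≤ (Finset.range B).card := by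
                    apply Finset.card_le_card
                    intro x hx
                    simp only [Finset.mem_filter] at hx
                    exact Finset.mem_range.mpr hx.2
                _ = B := Finset.card_range B


theorem dvd_gcd_mul_gcd {d u v : ℕ} (h : d ∣ u * v) : d ∣ Nat.gcd d u * Nat.gcd d v := by
  have h1 : Nat.gcd d u * Nat.gcd d v = Nat.gcd (d * Nat.gcd d v) (u * Nat.gcd d v) := by
    rw [Nat.gcd_mul_right]
  have h2 : u * Nat.gcd d v = Nat.gcd (u * d) (u * v) := by rw [Nat.gcd_mul_left]
  rw [h1]
  exact Nat.dvd_gcd (Dvd.intro _ rfl) (h2 ▸ Nat.dvd_gcd (Dvd.intro_left _ rfl) h)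

theorem sqrt_count (d : ℕ) (hd : 1 ≤ d) (c : ℤ) (hc : Int.gcd c d = 1) :
    ((Finset.range d).filter fun x : ℕ => (d:ℤ) ∣ (x:ℤ)^2 - c).card ≤ 2 * d.divisors.card ^ 2 := by
  classical
  set S := (Finset.range d).filter fun x : ℕ => (d:ℤ) ∣ (x:ℤ)^2 - c with hS
  rcases S.eq_empty_or_nonempty with h | ⟨x₀, hx₀⟩
  · simp [h]
  have hx₀' := hx₀
  rw [hS, Finset.mem_filter, Finset.mem_range] at hx₀'
  obtain ⟨hx₀lt, hx₀dvd⟩ := hx₀'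
  -- gcd(d, x₀) = 1
  have hgx₀ : Nat.gcd d x₀ = 1 := by
    set g := Nat.gcd d x₀ with hg
    have hgd : (g:ℤ) ∣ (d:ℤ) := Int.natCast_dvd_natCast.mpr (Nat.gcd_dvd_left d x₀)
    have hgx : (g:ℤ) ∣ (x₀:ℤ) := Int.natCast_dvd_natCast.mpr (Nat.gcd_dvd_right d x₀)
    have h2 : (g:ℤ) ∣ (x₀:ℤ)^2 := dvd_pow hgx (by norm_num)
    have h1 : (g:ℤ) ∣ c := by
      have h3 : (g:ℤ) ∣ (x₀:ℤ)^2 - c := hgd.trans hx₀dvd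
      have h4 := dvd_sub h2 h3
      simpa using h4
    have h3 : (g:ℤ) ∣ ((Int.gcd c (d:ℤ) : ℕ) : ℤ) := Int.dvd_coe_gcd h1 hgd
    rw [hc] at h3
    exact Nat.dvd_one.mp (by exact_mod_cast h3)
  -- the fiber map
  set F : ℕ → ℕ × ℕ := fun x => (Int.gcd (d:ℤ) ((x:ℤ) - x₀), Int.gcd (d:ℤ) ((x:ℤ) + x₀)) with hF
  have himg : S.image F ⊆ d.divisors ×ˢ d.divisors := by
    intro q hq
    rw [Finset.mem_image] at hq
    obtain ⟨x, hx, hxe⟩ := hq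
    have he : q.1 ∣ d := by
      rw [← hxe]
      exact Int.natCast_dvd_natCast.mp (by simpa using (Int.gcd_dvd_left _ _ : ((Int.gcd (d:ℤ) ((x:ℤ) - x₀) : ℕ) : ℤ) ∣ (d:ℤ)))
    have hf : q.2 ∣ d := by
      rw [← hxe]
      exact Int.natCast_dvd_natCast.mp (by simpa using (Int.gcd_dvd_left _ _ : ((Int.gcd (d:ℤ) ((x:ℤ) + x₀) : ℕ) : ℤ) ∣ (d:ℤ)))
    rw [Finset.mem_product]
    exact ⟨Nat.mem_divisors.mpr ⟨he, by omega⟩, Nat.mem_divisors.mpr ⟨hf, by omega⟩⟩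
  have hfiber : ∀ q ∈ S.image F, (S.filter fun x => F x = q).card ≤ 2 := by
    intro q hq
    by_contra hcon
    push_neg at hcon
    obtain ⟨x, y, z, hx, hy, hz, hxy, hxz, hyz⟩ := Finset.two_lt_card_iff.mp hcon
    have hmem : ∀ w ∈ S.filter fun x => F x = q, w < d ∧ ((d:ℤ) ∣ (w:ℤ)^2 - c) ∧ F w = q := by
      intro w hw
      rw [Finset.mem_filter, hS, Finset.mem_filter, Finset.mem_range] at hw
      exact ⟨hw.1.1, hw.1.2, hw.2⟩
    obtain ⟨hxd, hxdvd, hxq⟩ := hmem x hx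
    obtain ⟨hyd, hydvd, hyq⟩ := hmem y hy
    obtain ⟨hzd, hzdvd, hzq⟩ := hmem z hz
    set e := q.1 with he
    set f := q.2 with hf
    have hed : e ∣ d := by
      have := himg hq; rw [Finset.mem_product, Nat.mem_divisors] at this; exact this.1.1
    have hfd : f ∣ d := by
      have := himg hq; rw [Finset.mem_product] at this; exact (Nat.mem_divisors.mp this.2).1
    have he0 : 0 < e := Nat.pos_of_dvd_of_pos hed (by omega)
    have hf0 : 0 < f := Nat.pos_of_dvd_of_pos hfd (by omega)
    -- d ∣ e * f
    have hef : d ∣ e * f := by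
      have h1 : (d:ℤ) ∣ ((x:ℤ) - x₀) * ((x:ℤ) + x₀) := by
        have heq : ((x:ℤ) - x₀) * ((x:ℤ) + x₀) = ((x:ℤ)^2 - c) - ((x₀:ℤ)^2 - c) := by ring
        rw [heq]
        exact dvd_sub hxdvd hx₀dvd
      have h2 : d ∣ ((x:ℤ) - x₀).natAbs * ((x:ℤ) + x₀).natAbs := by
        rw [← Int.natAbs_mul]
        have := Int.natAbs_dvd_natAbs.mpr h1
        simpa using this
      have h3 := dvd_gcd_mul_gcd h2
      have hee : e = Nat.gcd d ((x:ℤ) - x₀).natAbs := by rw [he, ← hxq]; rfl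
      have hff : f = Nat.gcd d ((x:ℤ) + x₀).natAbs := by rw [hf, ← hxq]; rfl
      rw [hee, hff]; exact h3
    -- gcd(e,f) ∣ 2
    have hgef : Nat.gcd e f ∣ 2 := by
      have hge : (Nat.gcd e f : ℤ) ∣ (x:ℤ) - x₀ := by
        have h1 : (e:ℤ) ∣ (x:ℤ) - x₀ := by
          rw [he, ← hxq]; exact Int.gcd_dvd_right _ _
        exact dvd_trans (Int.natCast_dvd_natCast.mpr (Nat.gcd_dvd_left e f)) h1
      have hgf : (Nat.gcd e f : ℤ) ∣ (x:ℤ) + x₀ := by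
        have h1 : (f:ℤ) ∣ (x:ℤ) + x₀ := by
          rw [hf, ← hxq]; exact Int.gcd_dvd_right _ _
        exact dvd_trans (Int.natCast_dvd_natCast.mpr (Nat.gcd_dvd_right e f)) h1
      have hg2x : (Nat.gcd e f : ℤ) ∣ 2 * (x₀:ℤ) := by
        have h1 := dvd_sub hgf hge
        have heq : ((x:ℤ) + x₀) - ((x:ℤ) - x₀) = 2 * (x₀:ℤ) := by ring
        rwa [heq] at h1
      have hg2x' : Nat.gcd e f ∣ 2 * x₀ := by exact_mod_cast hg2x
      have hgd : Nat.gcd e f ∣ d := (Nat.gcd_dvd_left e f).trans hed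
      have hcop : Nat.Coprime (Nat.gcd e f) x₀ := by
        have h1 : Nat.gcd (Nat.gcd e f) x₀ ∣ Nat.gcd d x₀ :=
          Nat.dvd_gcd ((Nat.gcd_dvd_left _ _).trans hgd) (Nat.gcd_dvd_right _ _)
        rw [hgx₀] at h1
        exact Nat.dvd_one.mp h1
      exact Nat.Coprime.dvd_of_dvd_mul_right hcop hg2x'
    -- L = lcm e f
    set L := Nat.lcm e f with hL
    have hdL : d ∣ 2 * L := by
      have h1 : e * f = Nat.gcd e f * L := (Nat.gcd_mul_lcm e f).symm
      exact (h1 ▸ hef).trans (Nat.mul_dvd_mul_right hgef L)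
    have hL0 : 0 < L := Nat.pos_of_ne_zero (Nat.lcm_ne_zero (by omega) (by omega))
    have hd2L : d ≤ 2 * L := Nat.le_of_dvd (by omega) hdL
    -- pairwise differences have absolute value exactly L
    have hdiff : ∀ u v : ℕ, u < d → v < d → F u = q → F v = q → u ≠ v → ((u:ℤ) - v).natAbs = L := by
      intro u v hud hvd huq hvq huv
      have heu : (e:ℤ) ∣ (u:ℤ) - v := by
        have h1 : (e:ℤ) ∣ (u:ℤ) - x₀ := by rw [he, ← huq]; exact Int.gcd_dvd_right _ _
        have h2 : (e:ℤ) ∣ (v:ℤ) - x₀ := by rw [he, ← hvq]; exact Int.gcd_dvd_right _ _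
        have h3 := dvd_sub h1 h2; simpa using h3
      have hfu : (f:ℤ) ∣ (u:ℤ) - v := by
        have h1 : (f:ℤ) ∣ (u:ℤ) + x₀ := by rw [hf, ← huq]; exact Int.gcd_dvd_right _ _
        have h2 : (f:ℤ) ∣ (v:ℤ) + x₀ := by rw [hf, ← hvq]; exact Int.gcd_dvd_right _ _
        have h3 := dvd_sub h1 h2; simpa using h3
      have hLuv : (L:ℤ) ∣ (u:ℤ) - v := by
        have hLl : (L:ℤ) = (Int.lcm (e:ℤ) (f:ℤ) : ℕ) := by
          rw [hL]; simp [Int.lcm]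
        rw [hLl]
        exact Int.dvd_natAbs.mp (Int.natCast_dvd_natCast.mpr (Int.lcm_dvd (Int.dvd_natAbs.mpr heu) (Int.dvd_natAbs.mpr hfu)))
      have hLuv' : L ∣ ((u:ℤ) - v).natAbs := by
        rwa [Int.natCast_dvd] at hLuv
      obtain ⟨s, hs⟩ := hLuv'
      have hne : ((u:ℤ) - v).natAbs ≠ 0 := by
        intro h0; apply huv; omega
      have hlt : ((u:ℤ) - v).natAbs < d := by omega
      have hs1 : s ≠ 0 := by rintro rfl; omega
      have hs2 : s < 2 := by nlinarith
      have hs3 : s = 1 := by omega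
      rw [hs3, mul_one] at hs
      exact hs
    have h1 := hdiff x y hxd hyd hxq hyq hxy
    have h2 := hdiff y z hyd hzd hyq hzq hyz
    have h3 := hdiff x z hxd hzd hxq hzq hxz
    omega
  calc S.card ≤ 2 * (S.image F).card := Finset.card_le_mul_card_image S 2 hfiber
  _ ≤ 2 * (d.divisors ×ˢ d.divisors).card := by
      have := Finset.card_le_card himg
      omega
  _ = 2 * d.divisors.card ^ 2 := by rw [Finset.card_product]; ring



theorem slice_bound (d A : ℕ) (hd : 1 ≤ d) (x : ℕ → ℝ) (M : ℝ) (hM : 0 ≤ M)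
    (T : Finset (ℕ × ℕ))
    (hmem : ∀ p ∈ T, p.1 ∈ Finset.Icc 1 A ∧ Nat.Coprime p.1 d ∧
      ((d:ℤ) ∣ (p.2:ℤ)^2 + (p.1:ℤ)^2) ∧ 0 ≤ x p.1 ∧ x p.1 ≤ (p.2:ℝ) ∧ (p.2:ℝ) ≤ x p.1 + M) :
    (T.card : ℝ) ≤ (A : ℝ) * ((2 * (d.divisors.card:ℝ)^2) * (M / (d:ℝ) + 2)) := by
  classical
  have hd0 : (0:ℝ) < d := by exact_mod_cast hd
  have hcard : T.card = ∑ a ∈ Finset.Icc 1 A, (T.filter fun p => p.1 = a).card :=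
    Finset.card_eq_sum_card_fiberwise (fun p hp => (hmem p hp).1)
  have hslice : ∀ a ∈ Finset.Icc 1 A,
      ((T.filter fun p => p.1 = a).card : ℝ) ≤ (2 * (d.divisors.card:ℝ)^2) * (M / (d:ℝ) + 2) := by
    intro a _
    set Fib := T.filter fun p => p.1 = a with hFib
    rcases Fib.eq_empty_or_nonempty with hE | ⟨p₀, hp₀⟩
    · rw [hE]
      simp only [Finset.card_empty, Nat.cast_zero]
      positivity
    have hp₀' := Finset.mem_filter.mp hp₀
    have hcop : Nat.Coprime a d := by
      have := (hmem p₀ hp₀'.1).2.1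
      rwa [hp₀'.2] at this
    set c : ℤ := -(a:ℤ)^2 with hc
    set Qa := (Finset.range d).filter (fun r : ℕ => (d:ℤ) ∣ (r:ℤ)^2 - c) with hQa
    set qlo : ℤ := ⌈x a / (d:ℝ)⌉ - 1 with hqlo
    set qhi : ℤ := ⌊(x a + M) / (d:ℝ)⌋ with hqhi
    set Wa : Finset ℤ := Finset.Icc qlo qhi with hWa
    -- injection
    have hinj : ∀ p ∈ Fib, ∀ p' ∈ Fib,
        (fun p : ℕ × ℕ => (p.2 % d, ((p.2 / d : ℕ) : ℤ))) p =
        (fun p : ℕ × ℕ => (p.2 % d, ((p.2 / d : ℕ) : ℤ))) p' → p = p' := by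
      intro p hp p' hp' heq
      simp only [Prod.mk.injEq] at heq
      obtain ⟨hm, hqe⟩ := heq
      have hqe' : p.2 / d = p'.2 / d := by exact_mod_cast hqe
      have h1 : p.1 = a := (Finset.mem_filter.mp hp).2
      have h2 : p'.1 = a := (Finset.mem_filter.mp hp').2
      have h3 : p.2 = p'.2 := by
        rw [← Nat.div_add_mod p.2 d, ← Nat.div_add_mod p'.2 d, hqe', hm]
      exact Prod.ext (h1.trans h2.symm) h3
    have hmaps : ∀ p ∈ Fib, (p.2 % d, ((p.2 / d : ℕ) : ℤ)) ∈ Qa ×ˢ Wa := by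
      intro p hp
      have hpT := (Finset.mem_filter.mp hp).1
      have hpa := (Finset.mem_filter.mp hp).2
      obtain ⟨-, -, hdvd, hx0, hxb, hbx⟩ := hmem p hpT
      rw [hpa] at hx0 hxb hbx
      rw [Finset.mem_product]
      constructor
      · rw [hQa, Finset.mem_filter, Finset.mem_range]
        refine ⟨Nat.mod_lt _ (by omega), ?_⟩
        have hmod : (d:ℤ) ∣ ((p.2 % d : ℕ) : ℤ) - (p.2 : ℤ) := by
          exact (Nat.mod_modEq p.2 d).symm.dvd
        have key : ((p.2 % d : ℕ) : ℤ)^2 - c =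
            ((p.2 % d : ℕ) : ℤ)^2 - (p.2:ℤ)^2 + ((p.2:ℤ)^2 + (a:ℤ)^2) := by rw [hc]; ring
        rw [key]
        refine dvd_add ?_ ?_
        · have : ((p.2 % d : ℕ) : ℤ)^2 - (p.2:ℤ)^2 =
              (((p.2 % d : ℕ) : ℤ) - (p.2:ℤ)) * (((p.2 % d : ℕ) : ℤ) + (p.2:ℤ)) := by ring
          rw [this]
          exact hmod.mul_right _
        · rw [← hpa]; exact hdvd
      · rw [hWa, Finset.mem_Icc]
        set q : ℤ := ((p.2 / d : ℕ) : ℤ) with hq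
        have hqd : ((p.2 / d : ℕ) : ℝ) ≤ (p.2 : ℝ) / d := Nat.cast_div_le
        constructor
        · -- qlo ≤ q
          rw [hqlo]
          have hblt : p.2 < d * (p.2 / d + 1) := by
            have e2 := Nat.mod_lt p.2 (show 0 < d by omega)
            calc p.2 = d * (p.2 / d) + p.2 % d := (Nat.div_add_mod p.2 d).symm
            _ < d * (p.2 / d) + d := Nat.add_lt_add_left e2 _
            _ = d * (p.2 / d + 1) := by ring
          have hblt' : (p.2:ℝ) < (d:ℝ) * (((p.2/d : ℕ):ℝ) + 1) := by exact_mod_cast hblt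
          have hreal : x a / (d:ℝ) < (q:ℝ) + 1 := by
            rw [div_lt_iff₀ hd0]
            have hqc : ((q:ℤ):ℝ) = ((p.2/d : ℕ):ℝ) := by rw [hq]; push_cast; rfl
            calc x a ≤ (p.2:ℝ) := hxb
            _ < (d:ℝ) * (((p.2/d : ℕ):ℝ) + 1) := hblt'
            _ = (((q:ℤ):ℝ) + 1) * d := by rw [hqc]; ring
          have : ⌈x a / (d:ℝ)⌉ ≤ q + 1 := by
            apply Int.ceil_le.mpr
            push_cast
            exact hreal.le
          omega
        · -- q ≤ qhi
          rw [hqhi]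
          apply Int.le_floor.mpr
          have : ((q:ℤ):ℝ) ≤ (p.2:ℝ) / d := by rw [hq]; push_cast; exact_mod_cast hqd
          calc ((q:ℤ):ℝ) ≤ (p.2:ℝ)/d := this
          _ ≤ (x a + M) / d := by gcongr
    -- card bound
    have hcardle : Fib.card ≤ Qa.card * Wa.card := by
      calc Fib.card ≤ (Qa ×ˢ Wa).card :=
            Finset.card_le_card_of_injOn _ hmaps hinj
      _ = Qa.card * Wa.card := Finset.card_product _ _
    have hQ : (Qa.card : ℝ) ≤ 2 * (d.divisors.card:ℝ)^2 := by
      have hgcd : Int.gcd c (d:ℤ) = 1 := by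
        have h1 : Nat.Coprime (a^2) d := Nat.Coprime.pow_left 2 hcop
        simpa [Int.gcd, hc, Int.natAbs_neg, Int.natAbs_pow, Int.natAbs_natCast] using h1
      have := sqrt_count d hd c hgcd
      rw [hQa]
      exact_mod_cast this
    have hW : (Wa.card : ℝ) ≤ M / (d:ℝ) + 2 := by
      rcases le_or_gt qlo qhi with hle | hlt
      · have h1 : Wa.card = (qhi + 1 - qlo).toNat := by rw [hWa]; exact Int.card_Icc qlo qhi
        have h2 : ((qhi + 1 - qlo).toNat : ℤ) = qhi + 1 - qlo := Int.toNat_of_nonneg (by omega)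
        have h2' : (Wa.card : ℤ) = qhi + 1 - qlo := by rw [h1, h2]
        have h3 : (Wa.card : ℝ) = ((qhi + 1 - qlo : ℤ) : ℝ) := by exact_mod_cast h2'
        rw [h3]
        push_cast
        have h4 : (qhi:ℝ) ≤ (x a + M)/(d:ℝ) := Int.floor_le _
        have h5 : x a / (d:ℝ) ≤ (⌈x a / (d:ℝ)⌉ : ℝ) := Int.le_ceil _
        have h6 : (qlo:ℝ) = (⌈x a / (d:ℝ)⌉ : ℝ) - 1 := by rw [hqlo]; push_cast; ring
        have h7 : (x a + M)/(d:ℝ) = x a/(d:ℝ) + M/(d:ℝ) := by ring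
        linarith
      · have : Wa = ∅ := by rw [hWa]; exact Finset.Icc_eq_empty (by omega)
        rw [this]
        simp only [Finset.card_empty, Nat.cast_zero]
        positivity
    calc (Fib.card : ℝ) ≤ (Qa.card : ℝ) * (Wa.card : ℝ) := by exact_mod_cast hcardle
    _ ≤ (2 * (d.divisors.card:ℝ)^2) * (M / (d:ℝ) + 2) := by
        apply mul_le_mul hQ hW (by positivity) (by positivity)
  calc (T.card : ℝ) = ∑ a ∈ Finset.Icc 1 A, ((T.filter fun p => p.1 = a).card : ℝ) := by
        rw [hcard]; push_cast; ring
  _ ≤ (Finset.Icc 1 A).card • ((2 * (d.divisors.card:ℝ)^2) * (M / (d:ℝ) + 2)) :=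
        Finset.sum_le_card_nsmul _ _ _ hslice
  _ = (A:ℝ) * ((2 * (d.divisors.card:ℝ)^2) * (M / (d:ℝ) + 2)) := by
        rw [Nat.card_Icc, nsmul_eq_mul]
        norm_num



theorem radial_bound (d : ℕ) (hd : 1 ≤ d) (kset : Finset ℕ) (R : ℝ) (hR0 : 0 ≤ R)
    (T : Finset (ℕ × ℕ))
    (hmem : ∀ p ∈ T, Nat.Coprime p.1 p.2 ∧ 1 ≤ p.1 ∧ 1 ≤ p.2 ∧ d ∣ (p.1^2+p.2^2) ∧
      (p.1^2+p.2^2)/d ∈ kset)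
    (hτ : ∀ p ∈ T, 2 * (((p.1^2+p.2^2).divisors.card : ℝ))^2 ≤ R) :
    (T.card : ℝ) ≤ (kset.card : ℝ) * R := by
  classical
  have hcard : T.card = ∑ k ∈ kset, (T.filter fun p => (p.1^2+p.2^2)/d = k).card :=
    Finset.card_eq_sum_card_fiberwise (fun p hp => (hmem p hp).2.2.2.2)
  have hslice : ∀ k ∈ kset, ((T.filter fun p => (p.1^2+p.2^2)/d = k).card : ℝ) ≤ R := by
    intro k _
    set Fib := T.filter fun p => (p.1^2+p.2^2)/d = k with hFib
    rcases Fib.eq_empty_or_nonempty with hE | ⟨p₀, hp₀⟩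
    · rw [hE]; simpa using hR0
    set m := d * k with hm
    -- every member of the fiber has p.1^2+p.2^2 = m
    have hfm : ∀ p ∈ Fib, p.1^2 + p.2^2 = m := by
      intro p hp
      obtain ⟨hpT, hpk⟩ := Finset.mem_filter.mp hp
      have hdvd := (hmem p hpT).2.2.2.1
      rw [hm, ← hpk, Nat.mul_div_cancel' hdvd]
    have hm1 : 1 ≤ m := by
      have := hfm p₀ hp₀
      have h1 := (hmem p₀ (Finset.mem_filter.mp hp₀).1).2.1
      nlinarith
    haveI : NeZero m := ⟨by omega⟩
    -- the injection into square roots of -1 mod m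
    set ψ : ℕ × ℕ → ℕ := fun p => ((p.2 : ZMod m) * (p.1 : ZMod m)⁻¹).val with hψ
    have hunit : ∀ p ∈ Fib, IsUnit ((p.1 : ZMod m)) ∧ ((p.2 : ZMod m) * (p.1 : ZMod m)⁻¹)^2 = -1 := by
      intro p hp
      obtain ⟨hpT, -⟩ := Finset.mem_filter.mp hp
      obtain ⟨hcop, ha1, hb1, -, -⟩ := hmem p hpT
      have hpm := hfm p hp
      have hcop' : Nat.Coprime p.1 m := by
        have h1 : Nat.Coprime p.1 (p.2^2) := Nat.Coprime.pow_right 2 hcop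
        have h2 : Nat.Coprime p.1 (p.2^2 + p.1 * p.1) :=
          (Nat.coprime_add_mul_right_right p.1 (p.2^2) p.1).mpr h1
        have : p.2^2 + p.1 * p.1 = m := by rw [← hpm]; ring
        rwa [this] at h2
      have hu : IsUnit ((p.1 : ZMod m)) := (ZMod.isUnit_iff_coprime p.1 m).mpr hcop'
      refine ⟨hu, ?_⟩
      have hzero : (p.1 : ZMod m)^2 + (p.2 : ZMod m)^2 = 0 := by
        have : ((p.1^2 + p.2^2 : ℕ) : ZMod m) = ((m : ℕ) : ZMod m) := by rw [hpm]
        rw [ZMod.natCast_self] at this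
        push_cast at this
        exact this
      have hmul : (p.1 : ZMod m) * (p.1 : ZMod m)⁻¹ = 1 := ZMod.mul_inv_of_unit _ hu
      have key : (p.1 : ZMod m)^2 * (((p.2 : ZMod m) * (p.1 : ZMod m)⁻¹)^2 + 1) = 0 := by
        have expand : (p.1 : ZMod m)^2 * (((p.2 : ZMod m) * (p.1 : ZMod m)⁻¹)^2 + 1) =
            (p.2 : ZMod m)^2 * ((p.1 : ZMod m) * (p.1 : ZMod m)⁻¹)^2 + (p.1 : ZMod m)^2 := by
          ring
        rw [expand, hmul, one_pow, mul_one, add_comm]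
        exact hzero
      have hu2 : IsUnit ((p.1 : ZMod m)^2) := hu.pow 2
      obtain ⟨u, hu'⟩ := hu2
      have : ((p.2 : ZMod m) * (p.1 : ZMod m)⁻¹)^2 + 1 = 0 := by
        have := key
        rw [← hu'] at this
        exact (Units.mul_right_eq_zero u).mp this
      linear_combination this
    have hmaps : ∀ p ∈ Fib, ψ p ∈ (Finset.range m).filter (fun x : ℕ => (m:ℤ) ∣ (x:ℤ)^2 - (-1)) := by
      intro p hp
      obtain ⟨-, hsq⟩ := hunit p hp
      rw [Finset.mem_filter, Finset.mem_range]
      refine ⟨ZMod.val_lt _, ?_⟩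
      rw [← ZMod.intCast_zmod_eq_zero_iff_dvd]
      push_cast
      rw [ZMod.natCast_rightInverse _]
      rw [hsq]
      ring
    have hinj : ∀ p ∈ Fib, ∀ p' ∈ Fib, ψ p = ψ p' → p = p' := by
      intro p hp p' hp' heq
      obtain ⟨hu, -⟩ := hunit p hp
      obtain ⟨hu', -⟩ := hunit p' hp'
      obtain ⟨hpT, -⟩ := Finset.mem_filter.mp hp
      obtain ⟨hpT', -⟩ := Finset.mem_filter.mp hp'
      obtain ⟨hcop, ha1, hb1, -, -⟩ := hmem p hpT
      obtain ⟨hcop', ha1', hb1', -, -⟩ := hmem p' hpT'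
      have hpm := hfm p hp
      have hpm' := hfm p' hp'
      -- z = z'
      have hz : (p.2 : ZMod m) * (p.1 : ZMod m)⁻¹ = (p'.2 : ZMod m) * (p'.1 : ZMod m)⁻¹ := by
        have h1 : ((ψ p : ℕ) : ZMod m) = ((ψ p' : ℕ) : ZMod m) := by rw [heq]
        rwa [hψ, ZMod.natCast_rightInverse _, ZMod.natCast_rightInverse _] at h1
      have hmul : (p.1 : ZMod m)⁻¹ * (p.1 : ZMod m) = 1 := by
        rw [mul_comm]; exact ZMod.mul_inv_of_unit _ hu
      have hmul' : (p'.1 : ZMod m)⁻¹ * (p'.1 : ZMod m) = 1 := by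
        rw [mul_comm]; exact ZMod.mul_inv_of_unit _ hu'
      have hza : ((p.2 : ZMod m) * (p.1 : ZMod m)⁻¹) * (p.1 : ZMod m) = (p.2 : ZMod m) := by
        rw [mul_assoc, hmul, mul_one]
      have hza' : ((p'.2 : ZMod m) * (p'.1 : ZMod m)⁻¹) * (p'.1 : ZMod m) = (p'.2 : ZMod m) := by
        rw [mul_assoc, hmul', mul_one]
      have hcross : ((p.2 * p'.1 : ℕ) : ZMod m) = ((p'.2 * p.1 : ℕ) : ZMod m) := by
        push_cast
        rw [← hza, ← hza', hz]
        ring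
      have hmodeq : p.2 * p'.1 ≡ p'.2 * p.1 [MOD m] := (ZMod.natCast_eq_natCast_iff _ _ _).mp hcross
      have hlt1 : p.2 * p'.1 < m := by
        have h1 : (p.2 * p'.1)^2 < m^2 := by nlinarith [hpm, hpm', ha1, hb1, ha1', hb1']
        exact lt_of_pow_lt_pow_left₀ 2 (by omega) h1
      have hlt2 : p'.2 * p.1 < m := by
        have h1 : (p'.2 * p.1)^2 < m^2 := by nlinarith [hpm, hpm', ha1, hb1, ha1', hb1']
        exact lt_of_pow_lt_pow_left₀ 2 (by omega) h1
      have heqn : p.2 * p'.1 = p'.2 * p.1 := by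
        have := hmodeq
        unfold Nat.ModEq at this
        rwa [Nat.mod_eq_of_lt hlt1, Nat.mod_eq_of_lt hlt2] at this
      -- conclude equality
      have hdvd1 : p.1 ∣ p'.1 := by
        have h1 : p.1 ∣ p.2 * p'.1 := by rw [heqn]; exact dvd_mul_left p.1 p'.2
        exact Nat.Coprime.dvd_of_dvd_mul_left hcop h1
      have hdvd2 : p'.1 ∣ p.1 := by
        have h1 : p'.1 ∣ p'.2 * p.1 := by rw [← heqn]; exact dvd_mul_left p'.1 p.2
        exact Nat.Coprime.dvd_of_dvd_mul_left hcop' h1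
      have ha : p.1 = p'.1 := Nat.dvd_antisymm hdvd1 hdvd2
      have hb : p.2 = p'.2 := by
        rw [ha] at heqn
        exact Nat.eq_of_mul_eq_mul_right (by omega) heqn
      exact Prod.ext ha hb
    have hcardle : Fib.card ≤ ((Finset.range m).filter (fun x : ℕ => (m:ℤ) ∣ (x:ℤ)^2 - (-1))).card :=
      Finset.card_le_card_of_injOn ψ hmaps hinj
    have hsq := sqrt_count m hm1 (-1) (by simp [Int.gcd])
    have hfin : Fib.card ≤ 2 * m.divisors.card ^ 2 := hcardle.trans hsq
    calc (Fib.card : ℝ) ≤ 2 * ((m.divisors.card : ℝ))^2 := by exact_mod_cast hfin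
    _ ≤ R := by
        have h1 := hτ p₀ (Finset.mem_filter.mp hp₀).1
        have h2 := hfm p₀ hp₀
        rw [h2] at h1
        exact h1
  calc (T.card : ℝ) = ∑ k ∈ kset, ((T.filter fun p => (p.1^2+p.2^2)/d = k).card : ℝ) := by
        rw [hcard]; push_cast; ring
  _ ≤ kset.card • R := Finset.sum_le_card_nsmul _ _ _ hslice
  _ = (kset.card : ℝ) * R := nsmul_eq_mul _ _

end AuxLemmas




theorem tan_sub_tan' {x y : ℝ} (hx : Real.cos x ≠ 0) (hy : Real.cos y ≠ 0) :
    Real.tan x - Real.tan y = Real.sin (x - y) / (Real.cos x * Real.cos y) := by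
  rw [Real.tan_eq_sin_div_cos, Real.tan_eq_sin_div_cos, Real.sin_sub]
  field_simp

theorem cot_sub_cot' {x y : ℝ} (hx : Real.sin x ≠ 0) (hy : Real.sin y ≠ 0) :
    Real.cos y / Real.sin y - Real.cos x / Real.sin x =
      Real.sin (x - y) / (Real.sin x * Real.sin y) := by
  rw [Real.sin_sub]
  field_simp

theorem icc_card_le (a b : ℕ) (u v : ℝ) (hu : u ≤ (a:ℝ) + 1) (hv : (b:ℝ) ≤ v)
    (h0 : 0 ≤ v - u + 2) : ((Finset.Icc a b).card : ℝ) ≤ v - u + 2 := by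
  rcases le_or_gt a b with h | h
  · rw [Nat.card_Icc]
    have hab : a ≤ b + 1 := by omega
    have : ((b + 1 - a : ℕ) : ℝ) = (b:ℝ) + 1 - a := by
      push_cast [hab]
      ring
    rw [this]; linarith
  · rw [Finset.Icc_eq_empty (by omega)]
    simpa using h0

/-- The set `S(N)` of boundary primitive lattice points: coprime pairs of positive integers
`(a,b)` with `d ∣ a² + b²`, `N ≤ a² + b² ≤ 2N`, lying within `ΔN` of the radial boundary of
the annulus or within angle `Z` of the rays of angles `α` and `β`. -/
noncomputable def Sbd (α β : ℝ) (d N : ℕ) (Δ Z : ℝ) : Finset (ℕ × ℕ) :=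
  ((Finset.Icc 1 (2 * N)) ×ˢ (Finset.Icc 1 (2 * N))).filter fun p =>
    Nat.Coprime p.1 p.2 ∧ d ∣ p.1 ^ 2 + p.2 ^ 2 ∧
      N ≤ p.1 ^ 2 + p.2 ^ 2 ∧ p.1 ^ 2 + p.2 ^ 2 ≤ 2 * N ∧
      ((((N : ℝ) ≤ ((p.1 ^ 2 + p.2 ^ 2 : ℕ) : ℝ) ∧
            ((p.1 ^ 2 + p.2 ^ 2 : ℕ) : ℝ) ≤ (N : ℝ) + Δ * N) ∨
          (2 * (N : ℝ) - Δ * N ≤ ((p.1 ^ 2 + p.2 ^ 2 : ℕ) : ℝ) ∧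
            ((p.1 ^ 2 + p.2 ^ 2 : ℕ) : ℝ) ≤ 2 * N)) ∨
        ((α ≤ Real.arctan ((p.2 : ℝ) / (p.1 : ℝ)) ∧
            Real.arctan ((p.2 : ℝ) / (p.1 : ℝ)) ≤ α + Z) ∨
          (β - Z ≤ Real.arctan ((p.2 : ℝ) / (p.1 : ℝ)) ∧
            Real.arctan ((p.2 : ℝ) / (p.1 : ℝ)) ≤ β)))

theorem sector_alpha (α γ Z : ℝ) (hα : 0 ≤ α) (hαπ : α < π/2) (hγlt : γ < π/2)
    (hZ0 : 0 < Z) (hZγ : α + Z ≤ γ) (hαγ : α ≤ γ) (a b : ℕ) (ha : 1 ≤ a) (hb : 1 ≤ b)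
    (hang1 : α ≤ Real.arctan ((b:ℝ)/(a:ℝ))) (hang2 : Real.arctan ((b:ℝ)/(a:ℝ)) ≤ α + Z) :
    (a:ℝ) * Real.tan α ≤ (b:ℝ) ∧
      (b:ℝ) ≤ (a:ℝ) * Real.tan α + (a:ℝ) * (Z * (1/(Real.cos γ)^2)) ∧ 0 ≤ Real.tan α := by
  have hπ := Real.pi_pos
  have ha0 : (0:ℝ) < a := by exact_mod_cast ha
  have hc0 : 0 < Real.cos γ := Real.cos_pos_of_mem_Ioo ⟨by linarith, hγlt⟩
  have htanmono := Real.strictMonoOn_tan.monotoneOn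
  have hcosα : 0 < Real.cos α := Real.cos_pos_of_mem_Ioo ⟨by linarith, hαπ⟩
  have hcosαZ : 0 < Real.cos (α+Z) := Real.cos_pos_of_mem_Ioo ⟨by linarith, by linarith⟩
  have hcosαγ : Real.cos γ ≤ Real.cos α :=
    Real.cos_le_cos_of_nonneg_of_le_pi hα (by linarith) hαγ
  have hcosαZγ : Real.cos γ ≤ Real.cos (α+Z) :=
    Real.cos_le_cos_of_nonneg_of_le_pi (by linarith) (by linarith) hZγ
  have htt : Real.tan (α+Z) - Real.tan α ≤ Z * (1/(Real.cos γ)^2) := by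
    rw [tan_sub_tan' hcosαZ.ne' hcosα.ne']
    have hZsub : (α+Z) - α = Z := by ring
    rw [hZsub]
    have h3 : Real.cos γ * Real.cos γ ≤ Real.cos (α+Z) * Real.cos α :=
      mul_le_mul hcosαZγ hcosαγ hc0.le (by linarith)
    calc Real.sin Z / (Real.cos (α+Z) * Real.cos α) ≤ Z / (Real.cos γ * Real.cos γ) :=
          div_le_div₀ hZ0.le (Real.sin_le hZ0.le) (by positivity) h3
    _ = Z * (1/(Real.cos γ)^2) := by rw [sq]; ring
  have htα0 : 0 ≤ Real.tan α := by
    rw [Real.tan_eq_sin_div_cos]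
    exact div_nonneg (Real.sin_nonneg_of_nonneg_of_le_pi hα (by linarith)) hcosα.le
  set θ := Real.arctan ((b:ℝ)/(a:ℝ)) with hθdef
  have hθlt : θ < π/2 := Real.arctan_lt_pi_div_two _
  have hθgt : -(π/2) < θ := Real.neg_pi_div_two_lt_arctan _
  have htanθ : Real.tan θ = (b:ℝ)/(a:ℝ) := Real.tan_arctan _
  have hmA : α ∈ Set.Ioo (-(π/2)) (π/2) := ⟨by linarith, hαπ⟩
  have hmθ : θ ∈ Set.Ioo (-(π/2)) (π/2) := ⟨hθgt, hθlt⟩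
  have hmαZ : α+Z ∈ Set.Ioo (-(π/2)) (π/2) := ⟨by linarith, by linarith⟩
  have ht1 : Real.tan α ≤ Real.tan θ := htanmono hmA hmθ hang1
  have ht2 : Real.tan θ ≤ Real.tan (α+Z) := htanmono hmθ hmαZ hang2
  have hbeq : (a:ℝ) * Real.tan θ = (b:ℝ) := by rw [htanθ]; field_simp
  refine ⟨?_, ?_, htα0⟩
  · calc (a:ℝ) * Real.tan α ≤ (a:ℝ) * Real.tan θ := mul_le_mul_of_nonneg_left ht1 ha0.le
    _ = b := hbeq
  · calc (b:ℝ) = (a:ℝ) * Real.tan θ := hbeq.symm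
    _ ≤ (a:ℝ) * Real.tan (α+Z) := mul_le_mul_of_nonneg_left ht2 ha0.le
    _ ≤ (a:ℝ) * (Real.tan α + Z * (1/(Real.cos γ)^2)) :=
        mul_le_mul_of_nonneg_left (by linarith) ha0.le
    _ = (a:ℝ) * Real.tan α + (a:ℝ) * (Z * (1/(Real.cos γ)^2)) := by ring

theorem sector_beta (β γ Z : ℝ) (hγ0 : 0 < γ) (hγβ : γ ≤ β) (hβ2 : β ≤ π/2)
    (hZ0 : 0 < Z) (hβZγ : γ ≤ β - Z) (a b : ℕ) (ha : 1 ≤ a) (hb : 1 ≤ b)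
    (hang1 : β - Z ≤ Real.arctan ((b:ℝ)/(a:ℝ))) (hang2 : Real.arctan ((b:ℝ)/(a:ℝ)) ≤ β) :
    (b:ℝ) * (Real.cos β/Real.sin β) ≤ (a:ℝ) ∧
      (a:ℝ) ≤ (b:ℝ)*(Real.cos β/Real.sin β) + (b:ℝ)*(Z*(1/(Real.sin γ)^2)) ∧
      0 ≤ Real.cos β/Real.sin β := by
  have hπ := Real.pi_pos
  have ha0 : (0:ℝ) < a := by exact_mod_cast ha
  have hb0 : (0:ℝ) < b := by exact_mod_cast hb
  have hβ0 : 0 < β := by linarith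
  have hγlt : γ < π/2 := by linarith
  have hs0 : 0 < Real.sin γ := Real.sin_pos_of_pos_of_lt_pi hγ0 (by linarith)
  have hsinβ : 0 < Real.sin β := Real.sin_pos_of_pos_of_lt_pi hβ0 (by linarith)
  have hcosβ0 : 0 ≤ Real.cos β := Real.cos_nonneg_of_mem_Icc ⟨by linarith, hβ2⟩
  have hsinγβ : Real.sin γ ≤ Real.sin β :=
    Real.sin_le_sin_of_le_of_le_pi_div_two (by linarith) hβ2 hγβ
  set θ := Real.arctan ((b:ℝ)/(a:ℝ)) with hθdef
  have hθlt : θ < π/2 := Real.arctan_lt_pi_div_two _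
  have hθgt : -(π/2) < θ := Real.neg_pi_div_two_lt_arctan _
  have htanθ : Real.tan θ = (b:ℝ)/(a:ℝ) := Real.tan_arctan _
  have hθpos : 0 < θ := lt_of_lt_of_le hγ0 (le_trans hβZγ hang1)
  have hsinθ : 0 < Real.sin θ := Real.sin_pos_of_pos_of_lt_pi hθpos (by linarith)
  have hcosθ : 0 < Real.cos θ := Real.cos_pos_of_mem_Ioo ⟨hθgt, hθlt⟩
  have key : Real.sin θ * (a:ℝ) = (b:ℝ) * Real.cos θ := by
    rw [Real.tan_eq_sin_div_cos] at htanθ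
    exact (div_eq_div_iff hcosθ.ne' ha0.ne').mp htanθ
  have hcots : 0 ≤ Real.cos β/Real.sin β := div_nonneg hcosβ0 hsinβ.le
  refine ⟨?_, ?_, hcots⟩
  · have h2' : Real.cos β * Real.sin θ ≤ Real.sin β * Real.cos θ := by
      have hs := Real.sin_nonneg_of_nonneg_of_le_pi (show (0:ℝ) ≤ β - θ by linarith)
        (by linarith)
      rw [Real.sin_sub] at hs
      linarith
    have key2 : Real.sin β * (Real.sin θ * (a:ℝ)) = Real.sin β * ((b:ℝ) * Real.cos θ) := by
      rw [key]
    have h3 : ((b:ℝ)*Real.cos β)*Real.sin θ ≤ ((a:ℝ)*Real.sin β)*Real.sin θ := by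
      have hint := mul_le_mul_of_nonneg_left h2' hb0.le
      nlinarith [hint, key2]
    have h4 : (b:ℝ)*Real.cos β ≤ (a:ℝ)*Real.sin β := le_of_mul_le_mul_right h3 hsinθ
    rw [mul_div_assoc', div_le_iff₀ hsinβ]
    linarith
  · have haeq : (b:ℝ) * (Real.cos θ/Real.sin θ) = (a:ℝ) := by
      field_simp
      linarith [key]
    have hcc : Real.cos θ/Real.sin θ - Real.cos β/Real.sin β ≤ Z * (1/(Real.sin γ)^2) := by
      rw [cot_sub_cot' hsinβ.ne' hsinθ.ne']
      have hbt1 : Real.sin (β-θ) ≤ Z := le_trans (Real.sin_le (by linarith)) (by linarith)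
      have hsθγ : Real.sin γ ≤ Real.sin θ :=
        Real.sin_le_sin_of_le_of_le_pi_div_two (by linarith) hθlt.le (by linarith)
      have h3 : Real.sin γ * Real.sin γ ≤ Real.sin β * Real.sin θ :=
        mul_le_mul hsinγβ hsθγ hs0.le (by linarith)
      calc Real.sin (β-θ)/(Real.sin β*Real.sin θ) ≤ Z/(Real.sin γ*Real.sin γ) :=
            div_le_div₀ hZ0.le hbt1 (by positivity) h3
      _ = Z * (1/(Real.sin γ)^2) := by rw [sq]; ring
    calc (a:ℝ) = (b:ℝ)*(Real.cos θ/Real.sin θ) := haeq.symm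
    _ ≤ (b:ℝ)*(Real.cos β/Real.sin β + Z*(1/(Real.sin γ)^2)) :=
        mul_le_mul_of_nonneg_left (by linarith) hb0.le
    _ = (b:ℝ)*(Real.cos β/Real.sin β) + (b:ℝ)*(Z*(1/(Real.sin γ)^2)) := by ring

theorem combine_final (K G T1 T2 T3 s : ℝ) (hK1 : 1 ≤ K) (hG0 : 0 < G)
    (h1 : 0 ≤ T1) (h2 : 0 ≤ T2) (h3 : 0 ≤ T3)
    (hs : s ≤ (8*K^2*T3 + 16*K^2*T1) + (8*G*K^2*T2 + 8*K^2*T1) + (8*G*K^2*T2 + 8*K^2*T1)) :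
    s ≤ 48*K^2*(G+1)*(T1+T2+T3) := by
  nlinarith [mul_nonneg (sq_nonneg K) h1, mul_nonneg (sq_nonneg K) h2,
    mul_nonneg (sq_nonneg K) h3, mul_nonneg (mul_nonneg (sq_nonneg K) hG0.le) h1,
    mul_nonneg (mul_nonneg (sq_nonneg K) hG0.le) h2,
    mul_nonneg (mul_nonneg (sq_nonneg K) hG0.le) h3]

set_option maxHeartbeats 2000000 in
/-- Bound on the number of boundary points:
`#S(N) ≤ C(d^δ N^{1/2} + N Z / d^{1−δ} + Δ N^{1+δ}/d)`. -/
theorem stmt6 (α β δ : ℝ) (hα : 0 ≤ α) (hαβ : α < β) (hβ : β ≤ π / 2) (hδ : 0 < δ) :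
    ∃ C : ℝ, ∀ (N d : ℕ) (Δ Z : ℝ), 1 ≤ N → 1 ≤ d → 0 < Δ → Δ ≤ 1 → 0 < Z → Z ≤ (β - α) / 2 →
      ((Sbd α β d N Δ Z).card : ℝ) ≤
        C * ((d : ℝ) ^ δ * (N : ℝ) ^ ((1 : ℝ) / 2) + (N : ℝ) * Z / (d : ℝ) ^ ((1 : ℝ) - δ) +
          Δ * (N : ℝ) ^ ((1 : ℝ) + δ) / (d : ℝ)) := by
  classical
  set δ' : ℝ := min δ (1/2) with hδ'def
  have hδ'0 : 0 < δ' := lt_min hδ (by norm_num)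
  have hδ'δ : δ' ≤ δ := min_le_left _ _
  have hδ'half : δ' ≤ 1/2 := min_le_right _ _
  obtain ⟨K, hK1, hK⟩ := tau_bound (δ'/4) (by positivity)
  have hπ := Real.pi_pos
  set γ : ℝ := (α + β)/2 with hγdef
  have hβ0 : 0 < β := lt_of_le_of_lt hα hαβ
  have hγ0 : 0 < γ := by rw [hγdef]; linarith
  have hαπ : α < π/2 := lt_of_lt_of_le hαβ hβ
  have hγlt : γ < π/2 := by rw [hγdef]; linarith
  have hγβ : γ ≤ β := by rw [hγdef]; linarith
  have hαγ : α ≤ γ := by rw [hγdef]; linarith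
  have hc0 : 0 < Real.cos γ := Real.cos_pos_of_mem_Ioo ⟨by linarith, hγlt⟩
  have hs0 : 0 < Real.sin γ := Real.sin_pos_of_pos_of_lt_pi hγ0 (by linarith)
  set G : ℝ := 1/(Real.cos γ)^2 + 1/(Real.sin γ)^2 with hGdef
  have hG0 : 0 < G := by positivity
  have hGc : 1/(Real.cos γ)^2 ≤ G := by
    have h : (0:ℝ) < 1/(Real.sin γ)^2 := by positivity
    rw [hGdef]; linarith
  have hGs : 1/(Real.sin γ)^2 ≤ G := by
    have h : (0:ℝ) < 1/(Real.cos γ)^2 := by positivity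
    rw [hGdef]; linarith
  clear_value δ' γ G
  refine ⟨48 * K^2 * (G + 1), ?_⟩
  intro N d Δ Z hN hd hΔ0 hΔ1 hZ0 hZub
  have hN0 : (0:ℝ) < N := by exact_mod_cast hN
  have hN1 : (1:ℝ) ≤ N := by exact_mod_cast hN
  have hd0 : (0:ℝ) < d := by exact_mod_cast hd
  have hd1 : (1:ℝ) ≤ d := by exact_mod_cast hd
  set S := Sbd α β d N Δ Z with hSdef
  -- membership unpacking
  have hSmem : ∀ p ∈ S, 1 ≤ p.1 ∧ 1 ≤ p.2 ∧ Nat.Coprime p.1 p.2 ∧ d ∣ p.1^2+p.2^2 ∧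
      N ≤ p.1^2+p.2^2 ∧ p.1^2+p.2^2 ≤ 2*N := by
    intro p hp
    rw [hSdef, Sbd, Finset.mem_filter, Finset.mem_product, Finset.mem_Icc, Finset.mem_Icc] at hp
    exact ⟨hp.1.1.1, hp.1.2.1, hp.2.1, hp.2.2.1, hp.2.2.2.1, hp.2.2.2.2.1⟩
  set SA := S.filter (fun p => ((N:ℝ) ≤ ((p.1^2+p.2^2 : ℕ):ℝ) ∧ ((p.1^2+p.2^2 : ℕ):ℝ) ≤ (N:ℝ) + Δ*N) ∨
      (2*(N:ℝ) - Δ*N ≤ ((p.1^2+p.2^2 : ℕ):ℝ) ∧ ((p.1^2+p.2^2:ℕ):ℝ) ≤ 2*(N:ℝ))) with hSAdef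
  set SB := S.filter (fun p => α ≤ Real.arctan ((p.2:ℝ)/(p.1:ℝ)) ∧
      Real.arctan ((p.2:ℝ)/(p.1:ℝ)) ≤ α + Z) with hSBdef
  set SC := S.filter (fun p => β - Z ≤ Real.arctan ((p.2:ℝ)/(p.1:ℝ)) ∧
      Real.arctan ((p.2:ℝ)/(p.1:ℝ)) ≤ β) with hSCdef
  have hsplit : S ⊆ SA ∪ SB ∪ SC := by
    intro p hp
    have hp' := hp
    rw [hSdef, Sbd, Finset.mem_filter] at hp'
    have hdisj := hp'.2.2.2.2.2
    simp only [Finset.mem_union, hSAdef, hSBdef, hSCdef, Finset.mem_filter]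
    rcases hdisj with (h | (h | h))
    · exact Or.inl (Or.inl ⟨hp, h⟩)
    · exact Or.inl (Or.inr ⟨hp, h⟩)
    · exact Or.inr ⟨hp, h⟩
  have hcardsplit : (S.card : ℝ) ≤ (SA.card : ℝ) + SB.card + SC.card := by
    have h1 := Finset.card_le_card hsplit
    have h2 := Finset.card_union_le (SA ∪ SB) SC
    have h3 := Finset.card_union_le SA SB
    have : S.card ≤ SA.card + SB.card + SC.card := by omega
    exact_mod_cast this
  -- ====== SA bound ======
  set kset := Finset.Icc (N/d) ⌊((N:ℝ)+Δ*N)/(d:ℝ)⌋₊ ∪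
      Finset.Icc ⌈(2*(N:ℝ)-Δ*N)/(d:ℝ)⌉₊ ((2*N)/d) with hksetdef
  set R := 2*K^2*((2*(N:ℝ)))^(δ'/2) with hRdef
  have hR0 : (0:ℝ) ≤ R := by rw [hRdef]; positivity
  have hmemA : ∀ p ∈ SA, Nat.Coprime p.1 p.2 ∧ 1 ≤ p.1 ∧ 1 ≤ p.2 ∧ d ∣ (p.1^2+p.2^2) ∧
      (p.1^2+p.2^2)/d ∈ kset := by
    intro p hp
    have hpS : p ∈ S := (Finset.mem_filter.mp hp).1
    have hrad := (Finset.mem_filter.mp hp).2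
    obtain ⟨h1, h2, hcop, hdvd, hmN, hm2N⟩ := hSmem p hpS
    refine ⟨hcop, h1, h2, hdvd, ?_⟩
    have hmdc : ((p.1^2+p.2^2)/d) * d = p.1^2+p.2^2 := Nat.div_mul_cancel hdvd
    have hcast : (((p.1^2+p.2^2)/d : ℕ):ℝ) * (d:ℝ) = ((p.1^2+p.2^2 : ℕ):ℝ) := by
      exact_mod_cast congrArg (Nat.cast (R := ℝ)) hmdc
    have hcast2 : (((p.1^2+p.2^2)/d : ℕ):ℝ) = ((p.1^2+p.2^2 : ℕ):ℝ)/(d:ℝ) := by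
      rw [eq_div_iff hd0.ne']; exact hcast
    rw [hksetdef, Finset.mem_union, Finset.mem_Icc, Finset.mem_Icc]
    rcases hrad with ⟨ha, hb⟩ | ⟨ha, hb⟩
    · left
      refine ⟨Nat.div_le_div_right hmN, ?_⟩
      apply Nat.le_floor
      rw [hcast2]
      gcongr
    · right
      constructor
      · apply Nat.ceil_le.mpr
        rw [hcast2]
        gcongr
      · exact Nat.div_le_div_right hm2N
  have hτA : ∀ p ∈ SA, 2 * (((p.1^2+p.2^2).divisors.card : ℝ))^2 ≤ R := by
    intro p hp
    have hpS : p ∈ S := (Finset.mem_filter.mp hp).1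
    obtain ⟨h1, h2, hcop, hdvd, hmN, hm2N⟩ := hSmem p hpS
    have hm1 : 1 ≤ p.1^2+p.2^2 := le_trans hN hmN
    have h0m : (0:ℝ) < ((p.1^2+p.2^2 : ℕ):ℝ) := by exact_mod_cast hm1
    have hτ := hK (p.1^2+p.2^2) hm1
    have hm2 : ((p.1^2+p.2^2 : ℕ):ℝ) ≤ 2*(N:ℝ) := by exact_mod_cast hm2N
    have e1 : (((p.1^2+p.2^2 : ℕ):ℝ)^(δ'/4))^(2:ℕ) = ((p.1^2+p.2^2 : ℕ):ℝ)^(δ'/2) := by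
      rw [← Real.rpow_natCast (((p.1^2+p.2^2 : ℕ):ℝ)^(δ'/4)) 2, ← Real.rpow_mul h0m.le]
      congr 1
      ring
    have e2 : ((p.1^2+p.2^2 : ℕ):ℝ)^(δ'/2) ≤ (2*(N:ℝ))^(δ'/2) :=
      Real.rpow_le_rpow h0m.le hm2 (by linarith only [hδ'0])
    have hτ0 : (0:ℝ) ≤ (((p.1^2+p.2^2).divisors.card : ℕ):ℝ) := by positivity
    have hsq := pow_le_pow_left₀ hτ0 hτ 2
    calc 2 * (((p.1^2+p.2^2).divisors.card : ℕ):ℝ)^2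
        ≤ 2 * (K * ((p.1^2+p.2^2 : ℕ):ℝ)^(δ'/4))^2 := by linarith [hsq]
      _ = 2 * K^2 * ((((p.1^2+p.2^2 : ℕ):ℝ))^(δ'/4))^(2:ℕ) := by ring
      _ = 2 * K^2 * ((p.1^2+p.2^2 : ℕ):ℝ)^(δ'/2) := by rw [e1]
      _ ≤ R := by
          rw [hRdef]
          have h := mul_le_mul_of_nonneg_left e2 (show (0:ℝ) ≤ 2*K^2 by positivity)
          linarith
  have HSA : (SA.card : ℝ) ≤ (kset.card : ℝ) * R := radial_bound d hd kset R hR0 SA hmemA hτA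
  -- kset card bound
  have hk1 : ((Finset.Icc (N/d) ⌊((N:ℝ)+Δ*N)/(d:ℝ)⌋₊).card : ℝ) ≤ Δ*N/(d:ℝ) + 2 := by
    have hu : (N:ℝ)/(d:ℝ) ≤ ((N/d : ℕ):ℝ) + 1 := by
      have e2 := Nat.mod_lt N (show 0 < d by omega)
      have h1 : N < d*(N/d) + d := by
        calc N = d*(N/d) + N%d := (Nat.div_add_mod N d).symm
        _ < d*(N/d) + d := Nat.add_lt_add_left e2 _
      have h2 : (N:ℝ) < (d:ℝ)*((N/d : ℕ):ℝ) + d := by exact_mod_cast h1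
      rw [div_le_iff₀ hd0]
      nlinarith [h2]
    have hv : ((⌊((N:ℝ)+Δ*N)/(d:ℝ)⌋₊ : ℕ):ℝ) ≤ ((N:ℝ)+Δ*N)/(d:ℝ) :=
      Nat.floor_le (by positivity)
    have hvu : ((N:ℝ)+Δ*N)/(d:ℝ) - (N:ℝ)/(d:ℝ) = Δ*N/(d:ℝ) := by ring
    have h0 : (0:ℝ) ≤ ((N:ℝ)+Δ*N)/(d:ℝ) - (N:ℝ)/(d:ℝ) + 2 := by
      rw [hvu]; positivity
    have := icc_card_le (N/d) ⌊((N:ℝ)+Δ*N)/(d:ℝ)⌋₊ ((N:ℝ)/(d:ℝ)) (((N:ℝ)+Δ*N)/(d:ℝ)) hu hv h0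
    linarith
  have hk2 : ((Finset.Icc ⌈(2*(N:ℝ)-Δ*N)/(d:ℝ)⌉₊ ((2*N)/d)).card : ℝ) ≤ Δ*N/(d:ℝ) + 2 := by
    have hu : (2*(N:ℝ)-Δ*N)/(d:ℝ) ≤ ((⌈(2*(N:ℝ)-Δ*N)/(d:ℝ)⌉₊ : ℕ):ℝ) + 1 := by
      have := Nat.le_ceil ((2*(N:ℝ)-Δ*N)/(d:ℝ))
      linarith
    have hv : (((2*N)/d : ℕ):ℝ) ≤ 2*(N:ℝ)/(d:ℝ) := by
      have := Nat.cast_div_le (α := ℝ) (m := 2*N) (n := d)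
      push_cast at this ⊢
      linarith
    have hvu : 2*(N:ℝ)/(d:ℝ) - (2*(N:ℝ)-Δ*N)/(d:ℝ) = Δ*N/(d:ℝ) := by ring
    have h0 : (0:ℝ) ≤ 2*(N:ℝ)/(d:ℝ) - (2*(N:ℝ)-Δ*N)/(d:ℝ) + 2 := by rw [hvu]; positivity
    have := icc_card_le ⌈(2*(N:ℝ)-Δ*N)/(d:ℝ)⌉₊ ((2*N)/d) ((2*(N:ℝ)-Δ*N)/(d:ℝ))
      (2*(N:ℝ)/(d:ℝ)) hu hv h0
    linarith
  have hkcard : ((kset.card : ℕ):ℝ) ≤ 2*(Δ*N/(d:ℝ)) + 4 := by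
    have h1 := Finset.card_union_le (Finset.Icc (N/d) ⌊((N:ℝ)+Δ*N)/(d:ℝ)⌋₊)
      (Finset.Icc ⌈(2*(N:ℝ)-Δ*N)/(d:ℝ)⌉₊ ((2*N)/d))
    rw [hksetdef]
    calc ((Finset.Icc (N/d) ⌊((N:ℝ)+Δ*N)/(d:ℝ)⌋₊ ∪
        Finset.Icc ⌈(2*(N:ℝ)-Δ*N)/(d:ℝ)⌉₊ ((2*N)/d)).card : ℝ)
        ≤ ((Finset.Icc (N/d) ⌊((N:ℝ)+Δ*N)/(d:ℝ)⌋₊).card : ℝ) +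
          ((Finset.Icc ⌈(2*(N:ℝ)-Δ*N)/(d:ℝ)⌉₊ ((2*N)/d)).card : ℝ) := by exact_mod_cast h1
      _ ≤ 2*(Δ*N/(d:ℝ)) + 4 := by linarith
  have HSA2 : (SA.card : ℝ) ≤ (2*(Δ*N/(d:ℝ)) + 4) * R :=
    le_trans HSA (mul_le_mul_of_nonneg_right hkcard hR0)
  -- ====== common facts for angular bounds ======
  set A := Nat.sqrt (2*N) with hAdef
  set M : ℝ := G * Z * Real.sqrt (2*(N:ℝ)) with hMdef
  have hsqrt2N0 : (0:ℝ) ≤ 2*(N:ℝ) := by positivity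
  have hM0 : (0:ℝ) ≤ M := by
    rw [hMdef]
    exact mul_nonneg (mul_nonneg hG0.le hZ0.le) (Real.sqrt_nonneg _)
  have hMd0 : (0:ℝ) ≤ M/(d:ℝ) + 2 := by
    have h := div_nonneg hM0 hd0.le
    linarith only [h]
  have hcopd : ∀ a b : ℕ, Nat.Coprime a b → d ∣ a^2+b^2 → Nat.Coprime a d := by
    intro a b hcop hdvd
    have hg1 : Nat.gcd a d ∣ b^2 := by
      have hga : Nat.gcd a d ∣ a^2 := (Nat.gcd_dvd_left a d).trans (dvd_pow_self a (by norm_num))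
      have hgm : Nat.gcd a d ∣ a^2+b^2 := (Nat.gcd_dvd_right a d).trans hdvd
      have hsub := Nat.dvd_sub hgm hga
      simpa using hsub
    have hcop2 : Nat.gcd a (b^2) = 1 := Nat.Coprime.pow_right 2 hcop
    have h3 : Nat.gcd a d ∣ Nat.gcd a (b^2) := Nat.dvd_gcd (Nat.gcd_dvd_left a d) hg1
    rw [hcop2] at h3
    exact Nat.dvd_one.mp h3
  have hIcc : ∀ a b : ℕ, 1 ≤ a → a^2+b^2 ≤ 2*N → a ∈ Finset.Icc 1 A := by
    intro a b ha hm
    rw [Finset.mem_Icc]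
    refine ⟨ha, Nat.le_sqrt.mpr ?_⟩
    nlinarith [Nat.zero_le (b^2)]
  have hcastle : ∀ a b : ℕ, a^2+b^2 ≤ 2*N → ((a:ℝ)) ≤ Real.sqrt (2*(N:ℝ)) := by
    intro a b hm
    apply (Real.le_sqrt (by positivity) hsqrt2N0).mpr
    have h1 : ((a^2 : ℕ):ℝ) ≤ ((2*N : ℕ):ℝ) := by
      exact_mod_cast le_trans (Nat.le_add_right _ _) hm
    push_cast at h1 ⊢
    linarith only [h1]
  have hτd2 : (d.divisors.card : ℝ)^2 ≤ K^2 * (d:ℝ)^(δ'/2) := by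
    have hτ := hK d hd
    have hτ0 : (0:ℝ) ≤ (d.divisors.card : ℝ) := by positivity
    have hsq := pow_le_pow_left₀ hτ0 hτ 2
    have e1 : ((d:ℝ)^(δ'/4))^(2:ℕ) = (d:ℝ)^(δ'/2) := by
      rw [← Real.rpow_natCast ((d:ℝ)^(δ'/4)) 2, ← Real.rpow_mul hd0.le]
      congr 1
      ring
    calc (d.divisors.card : ℝ)^2 ≤ (K * (d:ℝ)^(δ'/4))^2 := hsq
    _ = K^2 * ((d:ℝ)^(δ'/4))^(2:ℕ) := by ring
    _ = K^2 * (d:ℝ)^(δ'/2) := by rw [e1]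
  have hZγ : α + Z ≤ γ := by rw [hγdef]; linarith
  have hβZγ : γ ≤ β - Z := by rw [hγdef]; linarith
  -- ====== SB bound ======
  have hmemB : ∀ p ∈ SB, p.1 ∈ Finset.Icc 1 A ∧ Nat.Coprime p.1 d ∧
      ((d:ℤ) ∣ (p.2:ℤ)^2 + (p.1:ℤ)^2) ∧ 0 ≤ (fun a : ℕ => (a:ℝ) * Real.tan α) p.1 ∧
      (fun a : ℕ => (a:ℝ) * Real.tan α) p.1 ≤ (p.2:ℝ) ∧
      (p.2:ℝ) ≤ (fun a : ℕ => (a:ℝ) * Real.tan α) p.1 + M := by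
    intro p hp
    have hpS : p ∈ S := (Finset.mem_filter.mp hp).1
    obtain ⟨hang1, hang2⟩ := (Finset.mem_filter.mp hp).2
    obtain ⟨h1, h2, hcop, hdvd, hmN, hm2N⟩ := hSmem p hpS
    obtain ⟨hlow, hup, htα0⟩ :=
      sector_alpha α γ Z hα hαπ hγlt hZ0 hZγ hαγ p.1 p.2 h1 h2 hang1 hang2
    have ha0 : (0:ℝ) ≤ (p.1:ℝ) := by positivity
    have hp1sqrt : (p.1:ℝ) ≤ Real.sqrt (2*(N:ℝ)) := hcastle p.1 p.2 hm2N
    refine ⟨hIcc p.1 p.2 h1 hm2N, hcopd p.1 p.2 hcop hdvd, ?_, ?_, ?_, ?_⟩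
    · have hdvd2 : (d:ℤ) ∣ ((p.2^2 + p.1^2 : ℕ) : ℤ) :=
        Int.natCast_dvd_natCast.mpr (by rwa [add_comm] at hdvd)
      push_cast at hdvd2
      exact hdvd2
    · simp only
      exact mul_nonneg ha0 htα0
    · simp only
      exact hlow
    · simp only
      have hle : (p.1:ℝ) * (Z * (1/(Real.cos γ)^2)) ≤ Real.sqrt (2*(N:ℝ)) * (Z * G) :=
        mul_le_mul hp1sqrt (mul_le_mul_of_nonneg_left hGc hZ0.le) (by positivity) (by positivity)
      have heq : M = Real.sqrt (2*(N:ℝ)) * (Z * G) := by rw [hMdef]; ring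
      rw [heq]
      linarith only [hup, hle]
  have HSB : (SB.card : ℝ) ≤ (A:ℝ) * ((2 * (d.divisors.card:ℝ)^2) * (M/(d:ℝ) + 2)) :=
    slice_bound d A hd (fun a : ℕ => (a:ℝ) * Real.tan α) M hM0 SB hmemB
  -- ====== SC bound ======
  set SC' := SC.image Prod.swap with hSC'def
  have hmemC : ∀ q ∈ SC', q.1 ∈ Finset.Icc 1 A ∧ Nat.Coprime q.1 d ∧
      ((d:ℤ) ∣ (q.2:ℤ)^2 + (q.1:ℤ)^2) ∧
      0 ≤ (fun b : ℕ => (b:ℝ) * (Real.cos β / Real.sin β)) q.1 ∧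
      (fun b : ℕ => (b:ℝ) * (Real.cos β / Real.sin β)) q.1 ≤ (q.2:ℝ) ∧
      (q.2:ℝ) ≤ (fun b : ℕ => (b:ℝ) * (Real.cos β / Real.sin β)) q.1 + M := by
    intro q hq
    rw [hSC'def, Finset.mem_image] at hq
    obtain ⟨p, hp, rfl⟩ := hq
    have hpS : p ∈ S := (Finset.mem_filter.mp hp).1
    obtain ⟨hang1, hang2⟩ := (Finset.mem_filter.mp hp).2
    obtain ⟨h1, h2, hcop, hdvd, hmN, hm2N⟩ := hSmem p hpS
    obtain ⟨hlow, hup, hcot0⟩ :=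
      sector_beta β γ Z hγ0 hγβ hβ hZ0 hβZγ p.1 p.2 h1 h2 hang1 hang2
    have hb0 : (0:ℝ) ≤ (p.2:ℝ) := by positivity
    have hswap2N : p.2^2 + p.1^2 ≤ 2*N := by rw [add_comm]; exact hm2N
    have hp2sqrt : (p.2:ℝ) ≤ Real.sqrt (2*(N:ℝ)) := hcastle p.2 p.1 hswap2N
    refine ⟨hIcc p.2 p.1 h2 hswap2N, hcopd p.2 p.1 hcop.symm (by rwa [add_comm] at hdvd), ?_,
      ?_, ?_, ?_⟩
    · have hdvd2 : (d:ℤ) ∣ ((p.1^2 + p.2^2 : ℕ) : ℤ) := Int.natCast_dvd_natCast.mpr hdvd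
      push_cast at hdvd2
      simpa using hdvd2
    · simp only [Prod.fst_swap, Prod.snd_swap]
      exact mul_nonneg hb0 hcot0
    · simp only [Prod.fst_swap, Prod.snd_swap]
      exact hlow
    · simp only [Prod.fst_swap, Prod.snd_swap]
      have hle : (p.2:ℝ) * (Z * (1/(Real.sin γ)^2)) ≤ Real.sqrt (2*(N:ℝ)) * (Z * G) :=
        mul_le_mul hp2sqrt (mul_le_mul_of_nonneg_left hGs hZ0.le) (by positivity) (by positivity)
      have heq : M = Real.sqrt (2*(N:ℝ)) * (Z * G) := by rw [hMdef]; ring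
      rw [heq]
      linarith only [hup, hle]
  have hSCcard : SC'.card = SC.card := Finset.card_image_of_injective _ Prod.swap_injective
  have HSC : (SC.card : ℝ) ≤ (A:ℝ) * ((2 * (d.divisors.card:ℝ)^2) * (M/(d:ℝ) + 2)) := by
    rw [← hSCcard]
    exact slice_bound d A hd (fun b : ℕ => (b:ℝ) * (Real.cos β / Real.sin β)) M hM0 SC' hmemC
  -- ====== numeric facts ======
  have hrt2N : Real.sqrt (2*(N:ℝ)) ≤ 2 * (N:ℝ)^((1:ℝ)/2) := by
    rw [Real.sqrt_eq_rpow, Real.mul_rpow (by norm_num) hN0.le]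
    have h2 : (2:ℝ)^((1:ℝ)/2) ≤ 2 := by
      calc (2:ℝ)^((1:ℝ)/2) ≤ 2^(1:ℝ) :=
            Real.rpow_le_rpow_of_exponent_le (by norm_num) (by norm_num)
      _ = 2 := Real.rpow_one 2
    have h3 : (0:ℝ) ≤ (N:ℝ)^((1:ℝ)/2) := by positivity
    exact mul_le_mul_of_nonneg_right h2 h3
  have hAbound : (A:ℝ) ≤ 2*(N:ℝ)^((1:ℝ)/2) := by
    have h1 : (A:ℝ) ≤ Real.sqrt (2*(N:ℝ)) := by
      apply (Real.le_sqrt (by positivity) hsqrt2N0).mpr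
      have h2 : ((A^2 : ℕ):ℝ) ≤ ((2*N : ℕ):ℝ) := by exact_mod_cast Nat.sqrt_le' (2*N)
      push_cast at h2 ⊢
      linarith only [h2]
    linarith only [h1, hrt2N]
  have h2Npow : ((2*(N:ℝ)))^(δ'/2) ≤ 2 * (N:ℝ)^((1:ℝ)/2) := by
    rw [Real.mul_rpow (by norm_num) hN0.le]
    apply mul_le_mul ?_ ?_ (by positivity) (by norm_num)
    · calc (2:ℝ)^(δ'/2) ≤ 2^(1:ℝ) :=
            Real.rpow_le_rpow_of_exponent_le (by norm_num) (by linarith)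
      _ = 2 := Real.rpow_one 2
    · exact Real.rpow_le_rpow_of_exponent_le hN1 (by linarith)
  have h2Npow2 : ((2*(N:ℝ)))^(δ'/2) ≤ 2 * (N:ℝ)^δ := by
    rw [Real.mul_rpow (by norm_num) hN0.le]
    apply mul_le_mul ?_ ?_ (by positivity) (by norm_num)
    · calc (2:ℝ)^(δ'/2) ≤ 2^(1:ℝ) :=
            Real.rpow_le_rpow_of_exponent_le (by norm_num) (by linarith)
      _ = 2 := Real.rpow_one 2
    · exact Real.rpow_le_rpow_of_exponent_le hN1 (by linarith)
  have hdpow : (d:ℝ)^(δ'/2) ≤ (d:ℝ)^δ :=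
    Real.rpow_le_rpow_of_exponent_le hd1 (by linarith)
  have hdδ1 : (1:ℝ) ≤ (d:ℝ)^δ := by
    calc (1:ℝ) = (d:ℝ)^(0:ℝ) := (Real.rpow_zero _).symm
    _ ≤ (d:ℝ)^δ := Real.rpow_le_rpow_of_exponent_le hd1 hδ.le
  have hN1δ : (N:ℝ)^((1:ℝ)+δ) = (N:ℝ) * (N:ℝ)^δ := by
    rw [Real.rpow_add hN0, Real.rpow_one]
  have hNhalf : (N:ℝ)^((1:ℝ)/2) * (N:ℝ)^((1:ℝ)/2) = (N:ℝ) := by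
    rw [← Real.rpow_add hN0]
    norm_num
  have hd1δ : (N:ℝ)*Z/(d:ℝ)^((1:ℝ)-δ) = (N:ℝ)*Z*(d:ℝ)^δ/(d:ℝ) := by
    rw [Real.rpow_sub hd0, Real.rpow_one, div_div_eq_mul_div]
  set T1 := (d:ℝ)^δ * (N:ℝ)^((1:ℝ)/2) with hT1
  set T2 := (N:ℝ)*Z/(d:ℝ)^((1:ℝ)-δ) with hT2
  set T3 := Δ*(N:ℝ)^((1:ℝ)+δ)/(d:ℝ) with hT3
  have hT10 : 0 ≤ T1 := by rw [hT1]; positivity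
  have hT20 : 0 ≤ T2 := by rw [hT2]; positivity
  have hT30 : 0 ≤ T3 := by rw [hT3]; positivity
  -- SA final bound
  have HA3 : (SA.card:ℝ) ≤ 8*K^2*T3 + 16*K^2*T1 := by
    have e1 : (2*(Δ*(N:ℝ)/(d:ℝ))+4)*R
        = (Δ*(N:ℝ)/(d:ℝ))*(4*K^2*(2*(N:ℝ))^(δ'/2)) + 8*K^2*(2*(N:ℝ))^(δ'/2) := by
      rw [hRdef]; ring
    have e2 : (Δ*(N:ℝ)/(d:ℝ))*(4*K^2*(2*(N:ℝ))^(δ'/2))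
        ≤ (Δ*(N:ℝ)/(d:ℝ))*(4*K^2*(2*(N:ℝ)^δ)) := by
      apply mul_le_mul_of_nonneg_left ?_ (by positivity)
      apply mul_le_mul_of_nonneg_left h2Npow2 (by positivity)
    have e3 : (Δ*(N:ℝ)/(d:ℝ))*(4*K^2*(2*(N:ℝ)^δ)) = 8*K^2*T3 := by
      rw [hT3, hN1δ]; ring
    have e4 : 8*K^2*(2*(N:ℝ))^(δ'/2) ≤ 8*K^2*(2*(N:ℝ)^((1:ℝ)/2)) :=
      mul_le_mul_of_nonneg_left h2Npow (by positivity)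
    have e5 : 16*K^2*(N:ℝ)^((1:ℝ)/2) ≤ 16*K^2*T1 := by
      rw [hT1]
      have h6 : (N:ℝ)^((1:ℝ)/2) ≤ (d:ℝ)^δ*(N:ℝ)^((1:ℝ)/2) := by
        calc (N:ℝ)^((1:ℝ)/2) = 1*(N:ℝ)^((1:ℝ)/2) := (one_mul _).symm
        _ ≤ (d:ℝ)^δ*(N:ℝ)^((1:ℝ)/2) := mul_le_mul_of_nonneg_right hdδ1 (by positivity)
      linarith only [mul_le_mul_of_nonneg_left h6 (show (0:ℝ) ≤ 16*K^2 by positivity)]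
    linarith only [HSA2, e1, e2, e3, e4, e5]
  -- SB/SC final bound
  have hτd3 : 2*(d.divisors.card:ℝ)^2 ≤ 2*K^2*(d:ℝ)^δ := by
    have h1 := mul_le_mul_of_nonneg_left hdpow (show (0:ℝ) ≤ K^2 by positivity)
    linarith only [hτd2, h1]
  have hMbound : M ≤ 2*G*Z*(N:ℝ)^((1:ℝ)/2) := by
    rw [hMdef]
    calc G*Z*Real.sqrt (2*(N:ℝ)) ≤ G*Z*(2*(N:ℝ)^((1:ℝ)/2)) :=
          mul_le_mul_of_nonneg_left hrt2N (mul_nonneg hG0.le hZ0.le)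
    _ = 2*G*Z*(N:ℝ)^((1:ℝ)/2) := by ring
  have hangbound : (A:ℝ) * ((2 * (d.divisors.card:ℝ)^2) * (M/(d:ℝ) + 2))
      ≤ 8*G*K^2*T2 + 8*K^2*T1 := by
    have s1 : (A:ℝ) * ((2 * (d.divisors.card:ℝ)^2) * (M/(d:ℝ) + 2))
        ≤ (2*(N:ℝ)^((1:ℝ)/2)) * ((2*K^2*(d:ℝ)^δ) * ((2*G*Z*(N:ℝ)^((1:ℝ)/2))/(d:ℝ) + 2)) := by
      have hMd2 : M/(d:ℝ) + 2 ≤ (2*G*Z*(N:ℝ)^((1:ℝ)/2))/(d:ℝ) + 2 := by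
        have h2 : M/(d:ℝ) ≤ (2*G*Z*(N:ℝ)^((1:ℝ)/2))/(d:ℝ) := (div_le_div_iff_of_pos_right hd0).mpr hMbound
        linarith only [h2]
      calc (A:ℝ) * ((2 * (d.divisors.card:ℝ)^2) * (M/(d:ℝ) + 2))
          ≤ (2*(N:ℝ)^((1:ℝ)/2)) * ((2 * (d.divisors.card:ℝ)^2) * (M/(d:ℝ) + 2)) :=
            mul_le_mul_of_nonneg_right hAbound
              (mul_nonneg (by positivity) hMd0)
        _ ≤ (2*(N:ℝ)^((1:ℝ)/2)) * ((2*K^2*(d:ℝ)^δ) * (M/(d:ℝ) + 2)) := by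
            apply mul_le_mul_of_nonneg_left ?_ (by positivity)
            exact mul_le_mul_of_nonneg_right hτd3 hMd0
        _ ≤ (2*(N:ℝ)^((1:ℝ)/2)) * ((2*K^2*(d:ℝ)^δ) * ((2*G*Z*(N:ℝ)^((1:ℝ)/2))/(d:ℝ) + 2)) := by
            apply mul_le_mul_of_nonneg_left ?_ (by positivity)
            exact mul_le_mul_of_nonneg_left hMd2 (by positivity)
    have s2 : (2*(N:ℝ)^((1:ℝ)/2)) * ((2*K^2*(d:ℝ)^δ) * ((2*G*Z*(N:ℝ)^((1:ℝ)/2))/(d:ℝ) + 2))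
        = 8*G*K^2*((N:ℝ)*Z*(d:ℝ)^δ/(d:ℝ)) + 8*K^2*T1 := by
      rw [hT1]
      linear_combination (8*G*K^2*Z*((d:ℝ)^δ)/(d:ℝ)) * hNhalf
    have s3 : 8*G*K^2*((N:ℝ)*Z*(d:ℝ)^δ/(d:ℝ)) = 8*G*K^2*T2 := by rw [hd1δ]
    linarith only [s1, s2, s3]
  have HB3 : (SB.card:ℝ) ≤ 8*G*K^2*T2 + 8*K^2*T1 := le_trans HSB hangbound
  have HC3 : (SC.card:ℝ) ≤ 8*G*K^2*T2 + 8*K^2*T1 := le_trans HSC hangbound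
  exact combine_final K G T1 T2 T3 (S.card:ℝ) hK1 hG0 hT10 hT20 hT30
    (by linarith only [hcardsplit, HA3, HB3, HC3])
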